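/- Let L be a subdirectly irreducible pk-algebra satisfying a* ≤ C(b) ∨ T(a)* for all a, b ∈ L, and let d be its least dense element. Then the underlying lattice of L is an ordinal sum B ⊕ C_i ⊕ B of a Boolean lattice, a chain with at most three elements, and a Boolean lattice; precisely: (i) every a ∈ L with a ≤ d has a complement in [0, d], i.e. there is b ≤ d with a ∧ b = 0 and a ∨ b = d; (ii) the map a ↦ a' is an order-reversing bijection from [0, d] onto [d', 1]; (iii) the interval [d, d'] is a chain with at most three elements; (iv) every a ∈ L satisfies a ≤ d, or d ≤ a ≤ d', or d' ≤ a. -/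

import Mathlib

/-- A pseudocomplemented De Morgan algebra (pm-algebra): a bounded distributive
lattice with a De Morgan involution `dm` and a pseudocomplement `pc`. -/
class PMAlgebra (L : Type*) extends DistribLattice L, BoundedOrder L where
  dm : L → L
  pc : L → L
  dm_dm : ∀ a : L, dm (dm a) = a
  dm_inf : ∀ a b : L, dm (a ⊓ b) = dm a ⊔ dm b
  pc_iff : ∀ a b : L, a ⊓ b = ⊥ ↔ b ≤ pc a

namespace PMAlgebra

variable {L : Type*} [PMAlgebra L]

/-- A congruence of a pm-algebra. -/
def IsCongruence (θ : L → L → Prop) : Prop :=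
  Equivalence θ ∧
  (∀ a b c d : L, θ a b → θ c d → θ (a ⊓ c) (b ⊓ d)) ∧
  (∀ a b c d : L, θ a b → θ c d → θ (a ⊔ c) (b ⊔ d)) ∧
  (∀ a b : L, θ a b → θ (dm a) (dm b)) ∧
  (∀ a b : L, θ a b → θ (pc a) (pc b))

/-- `L` is simple: it has more than one element and its only congruences are
equality and the total relation. -/
def Simple (L : Type*) [PMAlgebra L] : Prop :=
  Nontrivial L ∧ ∀ θ : L → L → Prop, IsCongruence θ →
    θ = (fun a b => a = b) ∨ θ = (fun _ _ => True)

/-- `L` is subdirectly irreducible: there is a congruence `μ ≠ Eq` contained in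
every congruence different from equality. -/
def SubdirectlyIrreducible (L : Type*) [PMAlgebra L] : Prop :=
  ∃ μ : L → L → Prop, IsCongruence μ ∧ μ ≠ (fun a b => a = b) ∧
    ∀ θ : L → L → Prop, IsCongruence θ → θ ≠ (fun a b => a = b) →
      ∀ a b : L, μ a b → θ a b

/-- A prime filter of the underlying lattice of `L`. -/
def IsPrimeFilter (P : Set L) : Prop :=
  P.Nonempty ∧ P ≠ Set.univ ∧
  (∀ a b : L, a ∈ P → a ≤ b → b ∈ P) ∧
  (∀ a b : L, a ∈ P → b ∈ P → a ⊓ b ∈ P) ∧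
  (∀ a b : L, a ⊔ b ∈ P → a ∈ P ∨ b ∈ P)

/-- The Birula–Rasiowa transformation. -/
def phi (P : Set L) : Set L := {a : L | dm a ∉ P}

/-- `P` is a maximal prime filter. -/
def IsMaximalPF (P : Set L) : Prop :=
  IsPrimeFilter P ∧ ∀ Q : Set L, IsPrimeFilter Q → P ⊆ Q → Q = P

/-- `P` is a minimal prime filter. -/
def IsMinimalPF (P : Set L) : Prop :=
  IsPrimeFilter P ∧ ∀ Q : Set L, IsPrimeFilter Q → Q ⊆ P → Q = P

/-- The body of `L`: prime filters that are neither maximal nor minimal. -/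
def body (L : Type*) [PMAlgebra L] : Set (Set L) :=
  {P : Set L | IsPrimeFilter P ∧ ¬ IsMaximalPF P ∧ ¬ IsMinimalPF P}

/-- The prime filter space of `L` is φ-connected. -/
def PhiConnected (L : Type*) [PMAlgebra L] : Prop :=
  ∀ S : Set (Set L), S ⊆ {P : Set L | IsPrimeFilter P} → S.Nonempty →
    (∀ P Q : Set L, P ∈ S → IsPrimeFilter Q → P ⊆ Q → Q ∈ S) →
    (∀ P Q : Set L, P ∈ S → IsPrimeFilter Q → Q ⊆ P → Q ∈ S) →
    (∀ P : Set L, P ∈ S → phi P ∈ S) →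
    S = {P : Set L | IsPrimeFilter P}

/-- The Kleene identity. -/
def Kleene (L : Type*) [PMAlgebra L] : Prop :=
  ∀ a b : L, a ⊓ dm a ≤ b ⊔ dm b

/-- The term `C(x) = (x ∧ x') ∨ (x ∧ x')*`. -/
def C (x : L) : L := (x ⊓ dm x) ⊔ pc (x ⊓ dm x)

/-- The term `T(x) = C(x) ∧ C(x)'`. -/
def T (x : L) : L := C x ⊓ dm (C x)

end PMAlgebra

open PMAlgebra

section Auxiliary

variable {L : Type*} [PMAlgebra L]

/-! ### Basic facts about the De Morgan involution -/

private lemma dm_anti {a b : L} (h : a ≤ b) : dm b ≤ dm a := by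
  have h1 : a ⊓ b = a := inf_eq_left.mpr h
  have h2 : dm (a ⊓ b) = dm a := by rw [h1]
  rw [dm_inf] at h2
  exact sup_eq_left.mp h2

private lemma dm_sup' (a b : L) : dm (a ⊔ b) = dm a ⊓ dm b := by
  have h := dm_inf (dm a) (dm b)
  rw [dm_dm, dm_dm] at h
  have h2 := congrArg dm h
  rw [dm_dm] at h2
  exact h2.symm

private lemma dm_bot' : (dm (⊥ : L)) = ⊤ := by
  apply top_unique
  calc (⊤ : L) = dm (dm ⊤) := (dm_dm ⊤).symm
    _ ≤ dm ⊥ := dm_anti bot_le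

private lemma le_dm_comm {a b : L} : a ≤ dm b ↔ b ≤ dm a := by
  constructor
  · intro h
    have := dm_anti h
    rwa [dm_dm] at this
  · intro h
    have := dm_anti h
    rwa [dm_dm] at this

/-! ### Basic facts about the pseudocomplement -/

private lemma inf_pc' (a : L) : a ⊓ pc a = ⊥ :=
  (pc_iff a (pc a)).mpr le_rfl

private lemma pc_anti {a b : L} (h : a ≤ b) : pc b ≤ pc a := by
  apply (pc_iff a (pc b)).mp
  apply le_bot_iff.mp
  calc a ⊓ pc b ≤ b ⊓ pc b := inf_le_inf_right _ h
    _ = ⊥ := inf_pc' b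

private lemma le_pc_pc (a : L) : a ≤ pc (pc a) := by
  apply (pc_iff (pc a) a).mp
  rw [inf_comm]
  exact inf_pc' a

private lemma pc_sup' (a b : L) : pc (a ⊔ b) = pc a ⊓ pc b := by
  apply le_antisymm
  · exact le_inf (pc_anti le_sup_left) (pc_anti le_sup_right)
  · apply (pc_iff _ _).mp
    have h1 : a ⊓ (pc a ⊓ pc b) = ⊥ := by
      apply le_bot_iff.mp
      calc a ⊓ (pc a ⊓ pc b) ≤ a ⊓ pc a := inf_le_inf_left a inf_le_left
        _ = ⊥ := inf_pc' a
    have h2 : b ⊓ (pc a ⊓ pc b) = ⊥ := by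
      apply le_bot_iff.mp
      calc b ⊓ (pc a ⊓ pc b) ≤ b ⊓ pc b := inf_le_inf_left b inf_le_right
        _ = ⊥ := inf_pc' b
    rw [inf_sup_right, h1, h2, sup_idem]

private lemma annih (a c : L) : pc a ⊓ c = pc (a ⊓ c) ⊓ c := by
  apply le_antisymm
  · exact inf_le_inf_right c (pc_anti inf_le_left)
  · have h2 : a ⊓ (pc (a ⊓ c) ⊓ c) = ⊥ := by
      calc a ⊓ (pc (a ⊓ c) ⊓ c) = (a ⊓ c) ⊓ pc (a ⊓ c) := by ac_rfl
        _ = ⊥ := inf_pc' (a ⊓ c)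
    exact le_inf ((pc_iff a _).mp h2) inf_le_right

private lemma pc_inf_dense {d : L} (hd : pc d = ⊥) (a : L) : pc (a ⊓ d) = pc a := by
  apply le_antisymm
  · have h2 : d ⊓ (pc (a ⊓ d) ⊓ a) = ⊥ := by
      calc d ⊓ (pc (a ⊓ d) ⊓ a) = (a ⊓ d) ⊓ pc (a ⊓ d) := by ac_rfl
        _ = ⊥ := inf_pc' _
    have h3 : pc (a ⊓ d) ⊓ a ≤ pc d := (pc_iff d _).mp h2
    rw [hd] at h3
    have h4 : pc (a ⊓ d) ⊓ a = ⊥ := le_bot_iff.mp h3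
    apply (pc_iff a _).mp
    rw [inf_comm]
    exact h4
  · exact pc_anti inf_le_left

private lemma pc_eq_of_inf_dense {f a b : L} (hf : pc f = ⊥) (h : a ⊓ f = b ⊓ f) :
    pc a = pc b := by
  have key : ∀ p q : L, p ⊓ f = q ⊓ f → pc p ≤ pc q := by
    intro p q e
    have h1 : f ⊓ (pc p ⊓ q) = ⊥ := by
      calc f ⊓ (pc p ⊓ q) = (q ⊓ f) ⊓ pc p := by ac_rfl
        _ = (p ⊓ f) ⊓ pc p := by rw [e]
        _ = (p ⊓ pc p) ⊓ f := by ac_rfl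
        _ = ⊥ := by rw [inf_pc', bot_inf_eq]
    have h2 : pc p ⊓ q ≤ pc f := (pc_iff f _).mp h1
    rw [hf] at h2
    apply (pc_iff q (pc p)).mp
    rw [inf_comm]
    exact le_bot_iff.mp h2
  exact le_antisymm (key a b h) (key b a h.symm)

private lemma d_le_sup_pc {d : L} (hleast : ∀ e : L, pc e = ⊥ → d ≤ e) (a : L) :
    d ≤ a ⊔ pc a :=
  hleast _ (by rw [pc_sup']; exact inf_pc' (pc a))

/-! ### Kleene consequences -/

private lemma kleene_le_dm (hk : Kleene L) {a b : L} (h : a ⊓ b = ⊥) : a ≤ dm b := by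
  have hk' : ∀ x y : L, x ⊓ dm x ≤ y ⊔ dm y := hk
  have hsup : dm a ⊔ dm b = ⊤ := by
    have hh := congrArg dm h
    rwa [dm_inf, dm_bot'] at hh
  have h1 : a ⊓ dm a ≤ a ⊓ dm b := by
    have hk1 : a ⊓ dm a ≤ b ⊔ dm b := hk' a b
    calc a ⊓ dm a = (a ⊓ dm a) ⊓ (b ⊔ dm b) := (inf_eq_left.mpr hk1).symm
      _ = ((a ⊓ dm a) ⊓ b) ⊔ ((a ⊓ dm a) ⊓ dm b) := by rw [inf_sup_left]
      _ ≤ (a ⊓ b) ⊔ (a ⊓ dm b) :=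
          sup_le_sup (inf_le_inf_right b inf_le_left) (inf_le_inf_right (dm b) inf_le_left)
      _ = ⊥ ⊔ (a ⊓ dm b) := by rw [h]
      _ = a ⊓ dm b := bot_sup_eq _
  calc a = a ⊓ (dm a ⊔ dm b) := by rw [hsup, inf_top_eq]
    _ = (a ⊓ dm a) ⊔ (a ⊓ dm b) := by rw [inf_sup_left]
    _ ≤ dm b := sup_le (le_trans h1 inf_le_right) inf_le_right

private lemma le_dm_pc (hk : Kleene L) (a : L) : a ≤ dm (pc a) :=
  kleene_le_dm hk (inf_pc' a)

private lemma pc_le_dm (hk : Kleene L) (a : L) : pc a ≤ dm a :=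
  kleene_le_dm hk (by rw [inf_comm]; exact inf_pc' a)

/-! ### Congruence machinery -/

private lemma si_pair (hsi : SubdirectlyIrreducible L) {α β : L → L → Prop}
    (hα : IsCongruence α) (hβ : IsCongruence β)
    (hEq : ∀ a b : L, α a b → β a b → a = b) {a₁ b₁ a₂ b₂ : L}
    (h1 : α a₁ b₁) (hne1 : a₁ ≠ b₁) (h2 : β a₂ b₂) (hne2 : a₂ ≠ b₂) : False := by
  obtain ⟨μ, hμc, hμne, hmin⟩ := hsi
  have hpair : ∃ p q : L, μ p q ∧ p ≠ q := by
    by_contra hc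
    push_neg at hc
    apply hμne
    funext p q
    exact propext ⟨fun h => hc p q h, fun h => h ▸ hμc.1.refl p⟩
  obtain ⟨p, q, hpq, hne⟩ := hpair
  have hαne : α ≠ (fun a b => a = b) := by
    intro e; rw [e] at h1; exact hne1 h1
  have hβne : β ≠ (fun a b => a = b) := by
    intro e; rw [e] at h2; exact hne2 h2
  exact hne (hEq p q (hmin α hα hαne p q hpq) (hmin β hβ hβne p q hpq))

private lemma cong_central {c : L} (h : c ⊓ dm c = ⊥) :
    IsCongruence (fun a b : L => a ⊓ c = b ⊓ c) := by
  have e : ∀ p q : L, (p ⊓ c) ⊓ (q ⊓ c) = (p ⊓ q) ⊓ c := fun p q => by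
    rw [inf_inf_inf_comm, inf_idem]
  refine ⟨⟨fun a => rfl, fun h => h.symm, fun h1 h2 => h1.trans h2⟩, ?_, ?_, ?_, ?_⟩
  · intro a b x y hab hxy
    rw [← e, hab, hxy, e]
  · intro a b x y hab hxy
    rw [inf_sup_right, hab, hxy, ← inf_sup_right]
  · intro a b hab
    have key : ∀ p : L, dm p ⊓ c = dm (p ⊓ c) ⊓ c := by
      intro p
      rw [dm_inf, inf_sup_right, inf_comm (dm c) c, h, sup_bot_eq]
    rw [key a, key b, hab]
  · intro a b hab
    rw [annih a c, annih b c, hab]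

private lemma dagger (hsi : SubdirectlyIrreducible L) {c : L} (h : c ⊓ dm c = ⊥) :
    c = ⊥ ∨ c = ⊤ := by
  by_contra hcon
  push_neg at hcon
  obtain ⟨hc0, hc1⟩ := hcon
  have h2 : dm c ⊓ c = ⊥ := by rwa [inf_comm] at h
  have h3 : dm c ⊓ dm (dm c) = ⊥ := by rw [dm_dm]; exact h2
  have hsup : c ⊔ dm c = ⊤ := by
    have hh := congrArg dm h
    rw [dm_inf, dm_dm, dm_bot'] at hh
    rwa [sup_comm] at hh
  have hEq : ∀ a b : L, a ⊓ c = b ⊓ c → a ⊓ dm c = b ⊓ dm c → a = b := by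
    intro a b e1 e2
    calc a = a ⊓ (c ⊔ dm c) := by rw [hsup, inf_top_eq]
      _ = (a ⊓ c) ⊔ (a ⊓ dm c) := by rw [inf_sup_left]
      _ = (b ⊓ c) ⊔ (b ⊓ dm c) := by rw [e1, e2]
      _ = b ⊓ (c ⊔ dm c) := by rw [inf_sup_left]
      _ = b := by rw [hsup, inf_top_eq]
  have pair1 : (⊥ : L) ⊓ c = dm c ⊓ c := by rw [bot_inf_eq, h2]
  have hne1 : (⊥ : L) ≠ dm c := by
    intro e
    apply hc1
    rw [← dm_dm c, ← e, dm_bot']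
  have pair2 : (⊥ : L) ⊓ dm c = c ⊓ dm c := by rw [bot_inf_eq, h]
  have hne2 : (⊥ : L) ≠ c := fun e => hc0 e.symm
  exact si_pair hsi (cong_central h) (cong_central h3) hEq pair1 hne1 pair2 hne2

private lemma cong_theta {f : L} (hf : pc f = ⊥) :
    IsCongruence (fun a b : L => a ⊓ f = b ⊓ f ∧ a ⊔ dm f = b ⊔ dm f) := by
  have einf : ∀ p q : L, (p ⊓ f) ⊓ (q ⊓ f) = (p ⊓ q) ⊓ f := fun p q => by
    rw [inf_inf_inf_comm, inf_idem]
  have esup : ∀ p q : L, (p ⊔ dm f) ⊔ (q ⊔ dm f) = (p ⊔ q) ⊔ dm f := fun p q => by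
    rw [sup_sup_sup_comm, sup_idem]
  refine ⟨⟨fun a => ⟨rfl, rfl⟩, fun h => ⟨h.1.symm, h.2.symm⟩,
      fun h1 h2 => ⟨h1.1.trans h2.1, h1.2.trans h2.2⟩⟩, ?_, ?_, ?_, ?_⟩
  · rintro a b x y ⟨ha1, ha2⟩ ⟨hx1, hx2⟩
    constructor
    · rw [← einf, ha1, hx1, einf]
    · rw [sup_inf_right, ha2, hx2, ← sup_inf_right]
  · rintro a b x y ⟨ha1, ha2⟩ ⟨hx1, hx2⟩
    constructor
    · rw [inf_sup_right, ha1, hx1, ← inf_sup_right]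
    · rw [← esup, ha2, hx2, esup]
  · rintro a b ⟨h1, h2⟩
    have key1 : ∀ p : L, dm p ⊓ f = dm (p ⊔ dm f) := fun p => by
      rw [dm_sup', dm_dm]
    have key2 : ∀ p : L, dm p ⊔ dm f = dm (p ⊓ f) := fun p => by
      rw [dm_inf]
    constructor
    · rw [key1, key1, h2]
    · rw [key2, key2, h1]
  · rintro a b ⟨h1, _⟩
    have hpp : pc a = pc b := pc_eq_of_inf_dense hf h1
    rw [hpp]
    exact ⟨rfl, rfl⟩

private lemma theta_pair (f : L) :
    (dm f) ⊓ f = (f ⊓ dm f) ⊓ f ∧ (dm f) ⊔ dm f = (f ⊓ dm f) ⊔ dm f := by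
  constructor
  · rw [inf_comm (dm f) f, inf_right_comm, inf_idem]
  · rw [sup_idem, sup_comm (f ⊓ dm f) (dm f), inf_comm f (dm f), sup_inf_self]

private lemma cong_rho {d x : L} (hd : pc d = ⊥) (hx : x ≤ dm x) :
    IsCongruence (fun a b : L =>
      a ⊓ d = b ⊓ d ∧ a ⊔ dm d = b ⊔ dm d ∧ (a ⊔ x) ⊓ dm x = (b ⊔ x) ⊓ dm x) := by
  have einf : ∀ p q : L, (p ⊓ q) ⊓ d = (p ⊓ d) ⊓ (q ⊓ d) := fun p q => by
    rw [inf_inf_inf_comm, inf_idem]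
  have esup : ∀ p q : L, (p ⊔ q) ⊔ dm d = (p ⊔ dm d) ⊔ (q ⊔ dm d) := fun p q => by
    rw [sup_sup_sup_comm, sup_idem]
  have einf3 : ∀ p q : L, ((p ⊓ q) ⊔ x) ⊓ dm x = ((p ⊔ x) ⊓ dm x) ⊓ ((q ⊔ x) ⊓ dm x) := by
    intro p q
    rw [inf_inf_inf_comm, inf_idem, ← sup_inf_right]
  have esup3 : ∀ p q : L, ((p ⊔ q) ⊔ x) ⊓ dm x = ((p ⊔ x) ⊓ dm x) ⊔ ((q ⊔ x) ⊓ dm x) := by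
    intro p q
    rw [← inf_sup_right, sup_sup_sup_comm, sup_idem]
  have keydm : ∀ p : L, (dm p ⊔ x) ⊓ dm x = dm ((p ⊔ x) ⊓ dm x) := by
    intro p
    rw [dm_inf, dm_sup', dm_dm, inf_sup_right, inf_eq_left.mpr hx]
  refine ⟨⟨fun a => ⟨rfl, rfl, rfl⟩, fun h => ⟨h.1.symm, h.2.1.symm, h.2.2.symm⟩,
      fun h1 h2 => ⟨h1.1.trans h2.1, h1.2.1.trans h2.2.1, h1.2.2.trans h2.2.2⟩⟩,
      ?_, ?_, ?_, ?_⟩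
  · rintro a b p q ⟨ha1, ha2, ha3⟩ ⟨hp1, hp2, hp3⟩
    refine ⟨?_, ?_, ?_⟩
    · rw [einf, ha1, hp1, ← einf]
    · rw [sup_inf_right, ha2, hp2, ← sup_inf_right]
    · rw [einf3, ha3, hp3, ← einf3]
  · rintro a b p q ⟨ha1, ha2, ha3⟩ ⟨hp1, hp2, hp3⟩
    refine ⟨?_, ?_, ?_⟩
    · rw [inf_sup_right, ha1, hp1, ← inf_sup_right]
    · rw [esup, ha2, hp2, ← esup]
    · rw [esup3, ha3, hp3, ← esup3]
  · rintro a b ⟨h1, h2, h3⟩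
    have key1 : ∀ p : L, dm p ⊓ d = dm (p ⊔ dm d) := fun p => by
      rw [dm_sup', dm_dm]
    have key2 : ∀ p : L, dm p ⊔ dm d = dm (p ⊓ d) := fun p => by
      rw [dm_inf]
    refine ⟨?_, ?_, ?_⟩
    · rw [key1, key1, h2]
    · rw [key2, key2, h1]
    · rw [keydm, keydm, h3]
  · rintro a b ⟨h1, _, _⟩
    have hpp : pc a = pc b := pc_eq_of_inf_dense hd h1
    rw [hpp]
    exact ⟨rfl, rfl, rfl⟩

/-! ### The main `hid`-powered machine -/

private lemma machine (hk : Kleene L) (hsi : SubdirectlyIrreducible L)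
    (hid : ∀ a b : L, pc a ≤ C b ⊔ pc (T a)) {w : L} (hneg : w ≤ dm w) (hw : w ≠ ⊥) :
    pc (T w) = ⊥ ∧ pc w ≤ dm (pc w) := by
  have s2 : w ≤ dm (pc w) := le_dm_pc hk w
  have s3 : pc w ≤ dm w := pc_le_dm hk w
  have hNlev : pc w ⊓ dm (pc w) ≤ pc w := inf_le_left
  have hNdm : pc w ⊓ dm (pc w) ≤ dm (pc w ⊓ dm (pc w)) := by
    rw [dm_inf, dm_dm]
    exact le_trans inf_le_right le_sup_left
  have s5 : T w = w ⊔ (pc w ⊓ dm (pc w)) := by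
    simp only [T, C]
    rw [inf_eq_left.mpr hneg, dm_sup', inf_sup_right]
    congr 1
    · rw [← inf_assoc, inf_eq_left.mpr hneg, inf_eq_left.mpr s2]
    · rw [inf_comm (dm w) (dm (pc w)), ← inf_assoc]
      exact inf_eq_left.mpr (le_trans inf_le_left s3)
  have s6 : pc (T w) = pc w ⊓ pc (pc w ⊓ dm (pc w)) := by
    rw [s5, pc_sup']
  have s8 : C (pc w ⊓ dm (pc w)) =
      (pc w ⊓ dm (pc w)) ⊔ pc (pc w ⊓ dm (pc w)) := by
    simp only [C]
    rw [inf_eq_left.mpr hNdm]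
  have s10 : pc w = (pc w ⊓ dm (pc w)) ⊔ (pc w ⊓ pc (pc w ⊓ dm (pc w))) := by
    apply le_antisymm
    · have h9 := hid w (pc w ⊓ dm (pc w))
      rw [s8, s6] at h9
      have h10 : pc w ≤ pc w ⊓ (((pc w ⊓ dm (pc w)) ⊔ pc (pc w ⊓ dm (pc w))) ⊔
          (pc w ⊓ pc (pc w ⊓ dm (pc w)))) := le_inf le_rfl h9
      refine le_trans h10 ?_
      rw [inf_sup_left, inf_sup_left]
      refine sup_le (sup_le ?_ ?_) ?_
      · exact le_trans inf_le_right le_sup_left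
      · exact le_sup_right
      · exact le_trans inf_le_right le_sup_right
    · exact sup_le inf_le_left inf_le_left
  have key : pc (pc w ⊓ dm (pc w)) ⊓ dm (pc (pc w ⊓ dm (pc w))) ≤ dm (pc w) := by
    apply le_dm_comm.mp
    rw [dm_inf, dm_dm]
    calc pc w = (pc w ⊓ dm (pc w)) ⊔ (pc w ⊓ pc (pc w ⊓ dm (pc w))) := s10
      _ ≤ dm (pc (pc w ⊓ dm (pc w))) ⊔ pc (pc w ⊓ dm (pc w)) :=
          sup_le (le_trans (le_dm_pc hk _) le_sup_left)
            (le_trans inf_le_right le_sup_right)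
  have s13 : (pc w ⊓ pc (pc w ⊓ dm (pc w))) ⊓
      dm (pc w ⊓ pc (pc w ⊓ dm (pc w))) = ⊥ := by
    rw [dm_inf, inf_sup_left]
    have t1 : (pc w ⊓ pc (pc w ⊓ dm (pc w))) ⊓ dm (pc w) = ⊥ := by
      calc (pc w ⊓ pc (pc w ⊓ dm (pc w))) ⊓ dm (pc w)
          = (pc w ⊓ dm (pc w)) ⊓ pc (pc w ⊓ dm (pc w)) := by ac_rfl
        _ = ⊥ := inf_pc' _
    have t2 : (pc w ⊓ pc (pc w ⊓ dm (pc w))) ⊓ dm (pc (pc w ⊓ dm (pc w))) = ⊥ := by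
      apply le_bot_iff.mp
      rw [inf_assoc]
      have hle1 : pc w ⊓ (pc (pc w ⊓ dm (pc w)) ⊓ dm (pc (pc w ⊓ dm (pc w))))
          ≤ pc w ⊓ dm (pc w) := inf_le_inf_left _ key
      have hle2 : pc w ⊓ (pc (pc w ⊓ dm (pc w)) ⊓ dm (pc (pc w ⊓ dm (pc w))))
          ≤ pc (pc w ⊓ dm (pc w)) := le_trans inf_le_right inf_le_left
      calc pc w ⊓ (pc (pc w ⊓ dm (pc w)) ⊓ dm (pc (pc w ⊓ dm (pc w))))
          ≤ (pc w ⊓ dm (pc w)) ⊓ pc (pc w ⊓ dm (pc w)) := le_inf hle1 hle2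
        _ = ⊥ := inf_pc' _
    rw [t1, t2, sup_idem]
  rcases dagger hsi s13 with hr | hr
  · constructor
    · rw [s6]; exact hr
    · calc pc w = (pc w ⊓ dm (pc w)) ⊔ (pc w ⊓ pc (pc w ⊓ dm (pc w))) := s10
        _ = pc w ⊓ dm (pc w) := by rw [hr, sup_bot_eq]
        _ ≤ dm (pc w) := inf_le_right
  · exfalso
    apply hw
    have hT : pc (T w) = ⊤ := by rw [s6]; exact hr
    have hTbot : T w = ⊥ := by
      have h := inf_pc' (T w)
      rwa [hT, inf_top_eq] at h
    apply le_bot_iff.mp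
    rw [← hTbot, s5]
    exact le_sup_left

/-- Dichotomy: either `d ≤ d'`, or `d = ⊤`. -/
private lemma dd_dichotomy (hk : Kleene L) (hsi : SubdirectlyIrreducible L)
    (hid : ∀ a b : L, pc a ≤ C b ⊔ pc (T a))
    (d : L) (hleast : ∀ e : L, pc e = ⊥ → d ≤ e) : d ≤ dm d ∨ d = ⊤ := by
  by_cases ht : d ⊓ dm d = ⊥
  · rcases dagger hsi ht with h | h
    · left; rw [h]; exact bot_le
    · right; exact h
  · have hneg : d ⊓ dm d ≤ dm (d ⊓ dm d) := by
      rw [dm_inf, dm_dm]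
      exact le_trans inf_le_left le_sup_right
    obtain ⟨-, hvt⟩ := machine hk hsi hid hneg ht
    have hDdense : pc ((d ⊓ dm d) ⊔ pc (d ⊓ dm d)) = ⊥ := by
      rw [pc_sup']
      exact inf_pc' (pc (d ⊓ dm d))
    have hdD : d ≤ (d ⊓ dm d) ⊔ pc (d ⊓ dm d) := hleast _ hDdense
    have hDle : (d ⊓ dm d) ⊔ pc (d ⊓ dm d) ≤ dm ((d ⊓ dm d) ⊔ pc (d ⊓ dm d)) := by
      rw [dm_sup']
      exact sup_le (le_inf hneg (le_dm_pc hk _)) (le_inf (pc_le_dm hk _) hvt)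
    have hdmDdense : pc (dm ((d ⊓ dm d) ⊔ pc (d ⊓ dm d))) = ⊥ := by
      apply le_bot_iff.mp
      rw [← hDdense]
      exact pc_anti hDle
    have hdD' : d ≤ dm ((d ⊓ dm d) ⊔ pc (d ⊓ dm d)) := hleast _ hdmDdense
    have h1 : (d ⊓ dm d) ⊔ pc (d ⊓ dm d) ≤ dm d := le_dm_comm.mp hdD'
    left
    exact le_trans hdD h1

/-- Every nonzero `w ≤ d` has `w* ≤ d` (case `d ≤ d'`). -/
private lemma pc_le_d (hk : Kleene L) (hsi : SubdirectlyIrreducible L)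
    (hid : ∀ a b : L, pc a ≤ C b ⊔ pc (T a))
    {d : L} (hd : pc d = ⊥) (hA : d ≤ dm d) {w : L} (hwd : w ≤ d) (hw : w ≠ ⊥) :
    pc w ≤ d := by
  have hneg : w ≤ dm w := le_trans hwd (le_trans hA (dm_anti hwd))
  obtain ⟨hT, -⟩ := machine hk hsi hid hneg hw
  have h := hid w d
  rw [hT, sup_bot_eq] at h
  have hCd : C d = d := by
    simp only [C]
    rw [inf_eq_left.mpr hA, hd, sup_bot_eq]
  rwa [hCd] at h

/-- Every non-dense element lies below `d` (case `d ≤ d'`). -/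
private lemma skel_le (hk : Kleene L) (hsi : SubdirectlyIrreducible L)
    (hid : ∀ a b : L, pc a ≤ C b ⊔ pc (T a))
    {d : L} (hd : pc d = ⊥) (hA : d ≤ dm d) {a : L} (ha : pc a ≠ ⊥) : a ≤ d := by
  have hw : pc a ⊓ d ≠ ⊥ := by
    intro h
    apply ha
    have h2 : pc a ≤ pc d := (pc_iff d (pc a)).mp (by rwa [inf_comm] at h)
    rw [hd] at h2
    exact le_bot_iff.mp h2
  have h1 : pc (pc a ⊓ d) ≤ d := pc_le_d hk hsi hid hd hA inf_le_right hw
  rw [pc_inf_dense hd] at h1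
  exact le_trans (le_pc_pc a) h1

/-! ### Classification of the middle interval -/

private lemma mid_half (hk : Kleene L) (hsi : SubdirectlyIrreducible L)
    {d x : L} (hd : pc d = ⊥) (hA : d ≤ dm d)
    (h1 : d ≤ x) (h2 : x ≤ dm d) (hx : x ≤ dm x) : x = d ∨ x = dm x := by
  by_contra hcon
  push_neg at hcon
  obtain ⟨hxd, hxx⟩ := hcon
  have hxdense : pc x = ⊥ := by
    apply le_bot_iff.mp
    rw [← hd]
    exact pc_anti h1
  -- θ_x-pair (dm x, x ⊓ dm x)
  have hth := theta_pair x
  have hne1 : dm x ≠ x ⊓ dm x := by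
    intro e
    apply hxx
    apply le_antisymm hx
    rw [e]
    exact inf_le_left
  -- ρ-pair (d, x)
  have hrho : d ⊓ d = x ⊓ d ∧ d ⊔ dm d = x ⊔ dm d ∧
      (d ⊔ x) ⊓ dm x = (x ⊔ x) ⊓ dm x := by
    refine ⟨?_, ?_, ?_⟩
    · rw [inf_idem]
      exact (inf_eq_right.mpr h1).symm
    · rw [sup_eq_right.mpr hA]
      exact (sup_eq_right.mpr h2).symm
    · rw [sup_eq_right.mpr h1, sup_idem]
  have hne2 : d ≠ x := fun e => hxd e.symm
  have hxdmx : dm x ⊓ x = x := inf_eq_right.mpr hx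
  have hEq : ∀ a b : L, (a ⊓ x = b ⊓ x ∧ a ⊔ dm x = b ⊔ dm x) →
      (a ⊓ d = b ⊓ d ∧ a ⊔ dm d = b ⊔ dm d ∧ (a ⊔ x) ⊓ dm x = (b ⊔ x) ⊓ dm x) →
      a = b := by
    rintro a b ⟨e1, e2⟩ ⟨-, -, e3⟩
    have keyx : ∀ p : L, (p ⊔ x) ⊓ dm x = (p ⊓ dm x) ⊔ x := fun p => by
      rw [inf_sup_right, inf_eq_left.mpr hx]
    rw [keyx, keyx] at e3
    have emeet : (a ⊓ dm x) ⊓ x = (b ⊓ dm x) ⊓ x := by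
      rw [inf_assoc, hxdmx, inf_assoc, hxdmx]
      exact e1
    have e4 : a ⊓ dm x = b ⊓ dm x := eq_of_inf_eq_sup_eq emeet e3
    exact eq_of_inf_eq_sup_eq e4 e2
  exact si_pair hsi (cong_theta hxdense) (cong_rho hd hx) hEq hth hne1 hrho hne2

private lemma mid_classify (hk : Kleene L) (hsi : SubdirectlyIrreducible L)
    {d x : L} (hd : pc d = ⊥) (hA : d ≤ dm d)
    (h1 : d ≤ x) (h2 : x ≤ dm d) : x = d ∨ x = dm x ∨ x = dm d := by
  have h1' : d ≤ dm x := by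
    have := dm_anti h2
    rwa [dm_dm] at this
  have h2' : dm x ≤ dm d := dm_anti h1
  by_cases hc1 : x ≤ dm x
  · rcases mid_half hk hsi hd hA h1 h2 hc1 with h | h
    · exact Or.inl h
    · exact Or.inr (Or.inl h)
  by_cases hc2 : dm x ≤ x
  · have hy : dm x ≤ dm (dm x) := by rwa [dm_dm]
    rcases mid_half hk hsi hd hA h1' h2' hy with h | h
    · right; right
      rw [← dm_dm x, h]
    · right; left
      rw [dm_dm] at h
      exact h.symm
  -- both comparabilities fail: contradiction via SI
  exfalso
  have hxdense : pc x = ⊥ := by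
    apply le_bot_iff.mp; rw [← hd]; exact pc_anti h1
  have hxdense' : pc (dm x) = ⊥ := by
    apply le_bot_iff.mp; rw [← hd]; exact pc_anti h1'
  have hEq : ∀ a b : L, (a ⊓ x = b ⊓ x ∧ a ⊔ dm x = b ⊔ dm x) →
      (a ⊓ dm x = b ⊓ dm x ∧ a ⊔ dm (dm x) = b ⊔ dm (dm x)) → a = b := by
    rintro a b ⟨e1, _⟩ ⟨_, f2⟩
    rw [dm_dm] at f2
    exact eq_of_inf_eq_sup_eq e1 f2
  have pair1 := theta_pair x
  have hne1 : dm x ≠ x ⊓ dm x := by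
    intro e
    apply hc2
    rw [e]
    exact inf_le_left
  have pair2 := theta_pair (dm x)
  have hne2 : dm (dm x) ≠ dm x ⊓ dm (dm x) := by
    intro e
    apply hc1
    have h3 : dm (dm x) ≤ dm x := by rw [e]; exact inf_le_left
    rwa [dm_dm] at h3
  exact si_pair hsi (cong_theta hxdense) (cong_theta hxdense') hEq pair1 hne1 pair2 hne2

end Auxiliary

/-- A subdirectly irreducible pk-algebra satisfying `a* ≤ C(b) ∨ T(a)*` with
least dense element `d` is, as a lattice, the ordinal sum `B ⊕ Cᵢ ⊕ B` of a
Boolean lattice, a chain with at most three elements, and a Boolean lattice. -/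
theorem ordinal_sum_structure {L : Type*} [PMAlgebra L]
    (hk : Kleene L) (hsi : SubdirectlyIrreducible L)
    (hid : ∀ a b : L, pc a ≤ C b ⊔ pc (T a))
    (d : L) (hd : pc d = ⊥) (hleast : ∀ e : L, pc e = ⊥ → d ≤ e) :
    (∀ a : L, a ≤ d → ∃ b : L, b ≤ d ∧ a ⊓ b = ⊥ ∧ a ⊔ b = d) ∧
    (Set.BijOn dm {a : L | a ≤ d} {a : L | dm d ≤ a} ∧
      ∀ a b : L, a ≤ d → b ≤ d → (a ≤ b ↔ dm b ≤ dm a)) ∧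
    ({a : L | d ≤ a ∧ a ≤ dm d}.encard ≤ 3 ∧
      ∀ a b : L, d ≤ a → a ≤ dm d → d ≤ b → b ≤ dm d → a ≤ b ∨ b ≤ a) ∧
    (∀ a : L, a ≤ d ∨ (d ≤ a ∧ a ≤ dm d) ∨ dm d ≤ a) := by
  refine ⟨?_, ⟨?_, ?_⟩, ?_⟩
  · -- (i) complements in [0, d]
    intro a ha
    refine ⟨pc a ⊓ d, inf_le_right, ?_, ?_⟩
    · rw [← inf_assoc, inf_pc', bot_inf_eq]
    · rw [sup_inf_left, sup_eq_right.mpr ha,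
        inf_eq_right.mpr (d_le_sup_pc hleast a)]
  · -- (ii) bijection
    refine ⟨?_, ?_, ?_⟩
    · intro a ha
      exact dm_anti ha
    · intro a _ b _ h
      have h2 := congrArg dm h
      rwa [dm_dm, dm_dm] at h2
    · intro b hb
      refine ⟨dm b, ?_, dm_dm b⟩
      have h2 : dm b ≤ dm (dm d) := dm_anti hb
      rwa [dm_dm] at h2
  · -- (ii) order reversing
    intro a b _ _
    constructor
    · exact dm_anti
    · intro h
      have h2 := dm_anti h
      rwa [dm_dm, dm_dm] at h2
  · -- (iii) and (iv), case split on d ≤ d' vs d = ⊤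
    rcases dd_dichotomy hk hsi hid d hleast with hA | hX
    · refine ⟨⟨?_, ?_⟩, ?_⟩
      · -- encard ≤ 3
        by_cases hex : ∃ s : L, (d ≤ s ∧ s ≤ dm d) ∧ s = dm s
        · obtain ⟨s₀, ⟨_, _⟩, hs⟩ := hex
          have hsub : {a : L | d ≤ a ∧ a ≤ dm d} ⊆ {d, s₀, dm d} := by
            rintro x ⟨hx1, hx2⟩
            rcases mid_classify hk hsi hd hA hx1 hx2 with h | h | h
            · exact Or.inl h
            · refine Or.inr (Or.inl ?_)
              apply le_antisymm
              · have hkk := hk x s₀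
                rwa [← h, inf_idem, ← hs, sup_idem] at hkk
              · have hkk := hk s₀ x
                rwa [← hs, inf_idem, ← h, sup_idem] at hkk
            · exact Or.inr (Or.inr h)
          calc ({a : L | d ≤ a ∧ a ≤ dm d}).encard
              ≤ ({d, s₀, dm d} : Set L).encard := Set.encard_mono hsub
            _ ≤ ({s₀, dm d} : Set L).encard + 1 := Set.encard_insert_le _ _
            _ ≤ (({dm d} : Set L).encard + 1) + 1 :=
                add_le_add_left (Set.encard_insert_le _ _) 1
            _ = 3 := by rw [Set.encard_singleton]; norm_num
        · have hsub : {a : L | d ≤ a ∧ a ≤ dm d} ⊆ {d, dm d} := by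
            rintro x ⟨hx1, hx2⟩
            rcases mid_classify hk hsi hd hA hx1 hx2 with h | h | h
            · exact Or.inl h
            · exact absurd ⟨x, ⟨hx1, hx2⟩, h⟩ hex
            · exact Or.inr h
          calc ({a : L | d ≤ a ∧ a ≤ dm d}).encard
              ≤ ({d, dm d} : Set L).encard := Set.encard_mono hsub
            _ ≤ ({dm d} : Set L).encard + 1 := Set.encard_insert_le _ _
            _ ≤ 3 := by rw [Set.encard_singleton]; norm_num
      · -- chain
        intro a b ha1 ha2 hb1 hb2
        rcases mid_classify hk hsi hd hA ha1 ha2 with h | h | h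
        · left; rw [h]; exact hb1
        · rcases mid_classify hk hsi hd hA hb1 hb2 with g | g | g
          · right; rw [g]; exact ha1
          · left
            have hkk := hk a b
            rwa [← h, inf_idem, ← g, sup_idem] at hkk
          · left; rw [g]; exact ha2
        · right; rw [h]; exact hb2
      · -- (iv)
        intro a
        by_cases hpa : pc a = ⊥
        · by_cases hpa' : pc (dm a) = ⊥
          · exact Or.inr (Or.inl ⟨hleast a hpa, le_dm_comm.mpr (hleast (dm a) hpa')⟩)
          · right; right
            have h := skel_le hk hsi hid hd hA hpa'
            have h2 := dm_anti h
            rwa [dm_dm] at h2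
        · exact Or.inl (skel_le hk hsi hid hd hA hpa)
    · -- degenerate case d = ⊤
      refine ⟨⟨?_, ?_⟩, ?_⟩
      · have hsub : {a : L | d ≤ a ∧ a ≤ dm d} ⊆ {d} := by
          rintro x ⟨hx1, _⟩
          have hxd : x ≤ d := by rw [hX]; exact le_top
          exact le_antisymm hxd hx1
        calc ({a : L | d ≤ a ∧ a ≤ dm d}).encard
            ≤ ({d} : Set L).encard := Set.encard_mono hsub
          _ ≤ 3 := by rw [Set.encard_singleton]; norm_num
      · intro a b _ _ hb1 _
        left
        calc a ≤ ⊤ := le_top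
          _ = d := hX.symm
          _ ≤ b := hb1
      · intro a
        left
        rw [hX]
        exact le_top
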